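/- If k > 0 satisfies tan(k) = k, then ∫₀¹ (sin(kr)/(kr))² r² dr = 1/(2(1+k²)). -/

import Mathlib

/-- If k > 0 satisfies tan(k) = k, then ∫₀¹ (sin(kr)/(kr))² r² dr = 1/(2(1+k²)). -/
theorem sinc_eigenfunction_normalization (k : ℝ) (hk : 0 < k)
    (htan : Real.tan k = k) :
    (∫ r in (0:ℝ)..1, (Real.sin (k * r) / (k * r)) ^ 2 * r ^ 2) =
      1 / (2 * (1 + k ^ 2)) := by
  have hcos : Real.cos k ≠ 0 := by
    intro h
    rw [Real.tan_eq_sin_div_cos, h, div_zero] at htan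
    exact hk.ne htan
  have hsin : Real.sin k = k * Real.cos k := by
    rw [Real.tan_eq_sin_div_cos, div_eq_iff hcos] at htan
    exact htan
  have hcos2 : Real.cos k ^ 2 = 1 / (1 + k ^ 2) := by
    have hpy := Real.sin_sq_add_cos_sq k
    rw [hsin] at hpy
    field_simp
    nlinarith
  have h1 : (∫ r in (0:ℝ)..1, (Real.sin (k * r) / (k * r)) ^ 2 * r ^ 2)
      = ∫ r in (0:ℝ)..1, Real.sin (k * r) ^ 2 / k ^ 2 := by
    apply intervalIntegral.integral_congr_ae
    apply Filter.Eventually.of_forall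
    intro r hr
    rw [Set.uIoc_of_le (by norm_num : (0:ℝ) ≤ 1)] at hr
    have hr0 : r ≠ 0 := ne_of_gt hr.1
    field_simp
  rw [h1]
  have h2 : (∫ r in (0:ℝ)..1, Real.sin (k * r) ^ 2 / k ^ 2)
      = (∫ r in (0:ℝ)..1, Real.sin (k * r) ^ 2) / k ^ 2 := by
    simp [intervalIntegral.integral_div]
  rw [h2, intervalIntegral.integral_comp_mul_left (fun x => Real.sin x ^ 2) hk.ne',
    integral_sin_sq]
  simp only [mul_zero, mul_one, Real.sin_zero, Real.cos_zero, smul_eq_mul, hsin, hcos2]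
  have h3 : Real.cos k ^ 2 * (1 + k ^ 2) = 1 := by
    rw [hcos2]; field_simp
  field_simp
  linear_combination (-k) * h3
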